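/- Let N ∈ ℕ and a ∈ ℤ be coprime, and let m = ord_N(a) be the multiplicative order of a modulo N. Then ord_p(a) = m for all primes p dividing N if and only if gcd(N, a^(m/r) - 1) = 1 for all primes r dividing m. -/

import Mathlib

theorem stmt_3 (N : ℕ) (hN : 1 < N) (a : ℤ) (ha : Int.gcd a N = 1)
    (m : ℕ) (hm : m = orderOf (a : ZMod N)) :
    (∀ p : ℕ, p.Prime → p ∣ N → orderOf (a : ZMod p) = m) ↔
      (∀ r : ℕ, r.Prime → r ∣ m → Int.gcd (N : ℤ) (a ^ (m / r) - 1) = 1) := by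
  haveI : NeZero N := ⟨by omega⟩
  -- a is a unit mod N
  have hu : IsUnit (a : ZMod N) := by
    have hc : IsCoprime a (N : ℤ) := Int.isCoprime_iff_gcd_eq_one.mpr ha
    have h2 := hc.map (Int.castRingHom (ZMod N))
    simp only [map_intCast, map_natCast, ZMod.natCast_self] at h2
    exact isCoprime_zero_right.mp h2
  have hmpos : 0 < m := by
    have h3 : orderOf ((hu.unit : (ZMod N)ˣ) : ZMod N) = orderOf hu.unit :=
      orderOf_units
    rw [hm, ← hu.unit_spec, h3]
    exact orderOf_pos hu.unit
  -- key: divisibility ↔ power equals one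
  have key : ∀ (M : ℕ) (k : ℕ), ((M : ℤ) ∣ a ^ k - 1) ↔ (a : ZMod M) ^ k = 1 := by
    intro M k
    rw [← ZMod.intCast_zmod_eq_zero_iff_dvd]
    push_cast
    rw [sub_eq_zero]
  have hNm : (N : ℤ) ∣ a ^ m - 1 := by
    rw [key]
    rw [hm]
    exact pow_orderOf_eq_one _
  constructor
  · intro h r hr hrm
    by_contra hg
    obtain ⟨p, hp, hpd⟩ := Nat.exists_prime_and_dvd hg
    have hp1 : (p : ℤ) ∣ (N : ℤ) :=
      dvd_trans (Int.natCast_dvd_natCast.mpr hpd) (Int.gcd_dvd_left _ _)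
    have hp2 : (p : ℤ) ∣ a ^ (m / r) - 1 :=
      dvd_trans (Int.natCast_dvd_natCast.mpr hpd) (Int.gcd_dvd_right _ _)
    have hpN : p ∣ N := Int.natCast_dvd_natCast.mp hp1
    have hdvd : orderOf (a : ZMod p) ∣ m / r :=
      orderOf_dvd_of_pow_eq_one ((key p (m / r)).mp hp2)
    rw [h p hp hpN] at hdvd
    have h1 : m / r < m := Nat.div_lt_self hmpos hr.one_lt
    have h2 : 0 < m / r := Nat.div_pos (Nat.le_of_dvd hmpos hrm) hr.pos
    exact absurd (Nat.le_of_dvd h2 hdvd) (not_le.mpr h1)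
  · intro h p hp hpN
    have hdvd : orderOf (a : ZMod p) ∣ m :=
      orderOf_dvd_of_pow_eq_one ((key p m).mp
        (dvd_trans (Int.natCast_dvd_natCast.mpr hpN) hNm))
    by_contra hne
    set d := orderOf (a : ZMod p) with hd
    have hdm : d ≠ m := hne
    have hq : m / d ≠ 1 := by
      intro h1
      have h2 := Nat.div_mul_cancel hdvd
      rw [h1, one_mul] at h2
      exact hdm h2
    obtain ⟨r, hr, hrd⟩ := Nat.exists_prime_and_dvd hq
    obtain ⟨t, ht⟩ := hrd
    have h2 := Nat.div_mul_cancel hdvd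
    rw [ht] at h2
    have hmeq : m = (d * t) * r := by rw [← h2]; ring
    have hrm : r ∣ m := ⟨d * t, by rw [hmeq]; ring⟩
    have hmr : m / r = d * t := by
      rw [hmeq, Nat.mul_div_cancel _ hr.pos]
    have hpow : (a : ZMod p) ^ (m / r) = 1 := by
      rw [hmr, pow_mul, hd, pow_orderOf_eq_one, one_pow]
    have hpg : (p : ℤ) ∣ (Int.gcd (N : ℤ) (a ^ (m / r) - 1) : ℤ) :=
      Int.dvd_coe_gcd (Int.natCast_dvd_natCast.mpr hpN) ((key p (m / r)).mpr hpow)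
    rw [h r hr hrm] at hpg
    have := Int.le_of_dvd one_pos hpg
    exact absurd this (by exact_mod_cast Nat.not_le.mpr hp.one_lt)
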